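/- Let F: ℝⁿ × ℂⁿ → ℝ be C² away from 0 with F(y, λz) = |λ|²F(y,z), and define a_{jk} − i b_{jk} := 2∂²F/∂z^j ∂z^k. Then a_{jk} = b_{jk} = 0 for all (y,z) with z ≠ 0 if and only if F has the form F(y,z) = ½ h_{jk}(y) conj(z^j) z^k for some Hermitian tensor h_{jk}(y) independent of z (necessarily h_{jk} = 2∂²F/∂z̄^j∂z^k). -/

import Mathlib

open scoped BigOperators

/-- Second derivative of `F(y, ·)` at `z` in the (outer, inner) directions `(v, w)`. -/
noncomputable def secondDeriv (n : ℕ) (F : (Fin n → ℝ) → (Fin n → ℂ) → ℝ)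
    (y : Fin n → ℝ) (z v w : Fin n → ℂ) : ℝ :=
  fderiv ℝ (fun x : Fin n → ℂ => fderiv ℝ (F y) x w) z v

/-- Real coordinate direction `∂/∂z^j_1`. -/
noncomputable def dir1 (n : ℕ) (j : Fin n) : Fin n → ℂ := Pi.single j 1

/-- Imaginary coordinate direction `∂/∂z^j_2`. -/
noncomputable def dir2 (n : ℕ) (j : Fin n) : Fin n → ℂ := Pi.single j Complex.I

/-- `a_{jk} := ½(G^{11}_{jk} − G^{22}_{jk})`, real part of `2∂²F/∂z^j∂z^k`. -/
noncomputable def aTensor (n : ℕ) (F : (Fin n → ℝ) → (Fin n → ℂ) → ℝ)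
    (y : Fin n → ℝ) (z : Fin n → ℂ) (j k : Fin n) : ℝ :=
  (1 / 2) * (secondDeriv n F y z (dir1 n j) (dir1 n k)
    - secondDeriv n F y z (dir2 n j) (dir2 n k))

/-- `b_{jk} := ½(G^{12}_{jk} + G^{21}_{jk})`, negative imaginary part of `2∂²F/∂z^j∂z^k`. -/
noncomputable def bTensor (n : ℕ) (F : (Fin n → ℝ) → (Fin n → ℂ) → ℝ)
    (y : Fin n → ℝ) (z : Fin n → ℂ) (j k : Fin n) : ℝ :=
  (1 / 2) * (secondDeriv n F y z (dir1 n j) (dir2 n k)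
    + secondDeriv n F y z (dir2 n j) (dir1 n k))

namespace HermAux

open Complex

variable {n : ℕ}

/-! ### generic decomposition lemmas -/

lemma pi_decomp (v : Fin n → ℂ) :
    ∑ j, ((v j).re • dir1 n j + (v j).im • dir2 n j) = v := by
  funext t
  simp only [Finset.sum_apply, Pi.add_apply, Pi.smul_apply, dir1, dir2, Pi.single_apply,
    smul_ite, smul_zero]
  rw [Finset.sum_add_distrib, Finset.sum_ite_eq, Finset.sum_ite_eq]
  simp [Complex.real_smul]

lemma smul_decomp (c : ℂ) (w : Fin n → ℂ) :
    c • w = c.re • w + c.im • (Complex.I • w) := by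
  funext j
  simp only [Pi.add_apply, Pi.smul_apply, Complex.real_smul, smul_eq_mul, smul_smul]
  conv_lhs => rw [← Complex.re_add_im c]
  ring

lemma bilin_expand (B : (Fin n → ℂ) →L[ℝ] (Fin n → ℂ) →L[ℝ] ℝ) (v w : Fin n → ℂ) :
    B v w = ∑ j, ∑ k, ((v j).re * (w k).re * B (dir1 n j) (dir1 n k)
      + (v j).re * (w k).im * B (dir1 n j) (dir2 n k)
      + (v j).im * (w k).re * B (dir2 n j) (dir1 n k)
      + (v j).im * (w k).im * B (dir2 n j) (dir2 n k)) := by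
  conv_lhs => rw [← pi_decomp v]
  rw [map_sum, ContinuousLinearMap.sum_apply]
  refine Finset.sum_congr rfl fun j _ => ?_
  rw [map_add, ContinuousLinearMap.add_apply, map_smul, map_smul,
    ContinuousLinearMap.smul_apply, ContinuousLinearMap.smul_apply]
  conv_lhs => rw [← pi_decomp w]
  rw [map_sum, map_sum, Finset.smul_sum, Finset.smul_sum, ← Finset.sum_add_distrib]
  refine Finset.sum_congr rfl fun k _ => ?_
  simp only [map_add, map_smul, smul_eq_mul]
  ring

/-! ### the `ℓ` and `χ` maps -/

noncomputable def ell (f : (Fin n → ℂ) → ℝ) (z w : Fin n → ℂ) : ℂ :=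
  ((fderiv ℝ f z w : ℝ) : ℂ) - Complex.I * ((fderiv ℝ f z (Complex.I • w) : ℝ) : ℂ)

noncomputable def chi (f : (Fin n → ℂ) → ℝ) (w z : Fin n → ℂ) : ℂ :=
  if z = 0 then 0 else (starRingEnd ℂ) (ell f z w)

lemma chi_zero (f : (Fin n → ℂ) → ℝ) (w : Fin n → ℂ) : chi f w 0 = 0 := if_pos rfl

lemma ell_add (f : (Fin n → ℂ) → ℝ) (z w w' : Fin n → ℂ) :
    ell f z (w + w') = ell f z w + ell f z w' := by
  simp only [ell, smul_add, map_add]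
  push_cast
  ring

lemma ell_real_smul (f : (Fin n → ℂ) → ℝ) (z w : Fin n → ℂ) (t : ℝ) :
    ell f z (t • w) = (t : ℂ) * ell f z w := by
  have h : Complex.I • t • w = t • (Complex.I • w) := smul_comm _ _ _
  simp only [ell, h, map_smul, smul_eq_mul]
  push_cast
  ring

lemma ell_I_smul (f : (Fin n → ℂ) → ℝ) (z w : Fin n → ℂ) :
    ell f z (Complex.I • w) = Complex.I * ell f z w := by
  have h : Complex.I • Complex.I • w = -w := by
    rw [smul_smul, Complex.I_mul_I, neg_one_smul]
  simp only [ell, h, map_neg]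
  push_cast
  linear_combination (((fderiv ℝ f z (Complex.I • w) : ℝ) : ℂ)) * Complex.I_sq

lemma ell_smul (f : (Fin n → ℂ) → ℝ) (z w : Fin n → ℂ) (c : ℂ) :
    ell f z (c • w) = c * ell f z w := by
  rw [smul_decomp c w, ell_add, ell_real_smul, ell_real_smul, ell_I_smul]
  conv_rhs => rw [← Complex.re_add_im c]
  ring

lemma ell_expand (f : (Fin n → ℂ) → ℝ) (u z : Fin n → ℂ) :
    ell f u z = ∑ k, z k * ell f u (Pi.single k 1) := by
  let A : (Fin n → ℂ) →+ ℂ := AddMonoidHom.mk' (ell f u) (ell_add f u)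
  have h1 : z = ∑ k, (z k) • (Pi.single k (1:ℂ) : Fin n → ℂ) := by
    conv_lhs => rw [← Finset.univ_sum_single z]
    refine Finset.sum_congr rfl fun k _ => ?_
    rw [← Pi.single_smul, smul_eq_mul, mul_one]
  calc ell f u z = A z := rfl
    _ = ∑ k, A ((z k) • (Pi.single k (1:ℂ) : Fin n → ℂ)) := by
        conv_lhs => rw [h1]
        exact map_sum A _ _
    _ = ∑ k, z k * ell f u (Pi.single k 1) :=
        Finset.sum_congr rfl fun k _ => ell_smul f u (Pi.single k 1) (z k)

section withf

variable (f : (Fin n → ℂ) → ℝ)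
  (hf : ∀ z : Fin n → ℂ, z ≠ 0 → ContDiffAt ℝ 2 f z)
  (hhom : ∀ (l : ℂ) (z : Fin n → ℂ), f (l • z) = ‖l‖ ^ 2 * f z)

include hf in
lemma hdiff {z : Fin n → ℂ} (hz : z ≠ 0) : DifferentiableAt ℝ f z :=
  (hf z hz).differentiableAt (by norm_num)

include hf hhom in
lemma fderiv_smul' {l : ℂ} {z : Fin n → ℂ} (hl : l ≠ 0) (hz : z ≠ 0) (w : Fin n → ℂ) :
    fderiv ℝ f (l • z) (l • w) = ‖l‖ ^ 2 * fderiv ℝ f z w := by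
  have hz' : l • z ≠ 0 := smul_ne_zero hl hz
  set m : (Fin n → ℂ) →L[ℝ] (Fin n → ℂ) :=
    (l • ContinuousLinearMap.id ℂ (Fin n → ℂ)).restrictScalars ℝ with hm
  have hmx : ∀ x, m x = l • x := fun x => rfl
  have h1 : HasFDerivAt (fun x => f (l • x)) ((fderiv ℝ f (l • z)).comp m) z := by
    have := ((hdiff f hf hz').hasFDerivAt).comp z (m.hasFDerivAt (x := z))
    exact this
  have h2 : HasFDerivAt (fun x => f (l • x)) ((‖l‖ ^ 2) • fderiv ℝ f z) z := by
    have h3 : (fun x : Fin n → ℂ => f (l • x)) = fun x => ‖l‖ ^ 2 * f x :=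
      funext fun x => hhom l x
    rw [h3]
    exact ((hdiff f hf hz).hasFDerivAt).const_mul _
  have h4 := h1.unique h2
  calc fderiv ℝ f (l • z) (l • w) = ((fderiv ℝ f (l • z)).comp m) w := rfl
    _ = ((‖l‖ ^ 2) • fderiv ℝ f z) w := by rw [h4]
    _ = ‖l‖ ^ 2 * fderiv ℝ f z w := rfl

include hf hhom in
lemma euler {z : Fin n → ℂ} (hz : z ≠ 0) : fderiv ℝ f z z = 2 * f z := by
  have hu : HasDerivAt (fun t : ℝ => t • z) z 1 := by
    simpa using (hasDerivAt_id (1:ℝ)).smul_const z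
  have h1 : HasDerivAt (fun t : ℝ => f (t • z)) (fderiv ℝ f z z) 1 := by
    have hd : HasFDerivAt f (fderiv ℝ f z) ((1:ℝ) • z) := by
      rw [one_smul]; exact (hdiff f hf hz).hasFDerivAt
    exact hd.comp_hasDerivAt 1 hu
  have h3 : (fun t : ℝ => f (t • z)) = fun t : ℝ => t ^ 2 * f z := by
    funext t
    have hsm : (t : ℝ) • z = ((t : ℂ)) • z := by
      funext j; simp [Complex.real_smul]
    rw [hsm, hhom]
    simp [Complex.norm_real, Real.norm_eq_abs, _root_.sq_abs]
  have h2 : HasDerivAt (fun t : ℝ => f (t • z)) (2 * f z) 1 := by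
    rw [h3]
    simpa using (hasDerivAt_pow 2 (1:ℝ)).mul_const (f z)
  exact h1.unique h2

include hf in
lemma hasFDerivAt_fderiv {z : Fin n → ℂ} (hz : z ≠ 0) :
    HasFDerivAt (fderiv ℝ f) (fderiv ℝ (fderiv ℝ f) z) z := by
  have h1 : ContDiffAt ℝ 1 (fderiv ℝ f) z := (hf z hz).fderiv_right (by norm_num)
  exact (h1.differentiableAt one_ne_zero).hasFDerivAt

include hf in
lemma hasFDerivAt_fderiv_apply {z : Fin n → ℂ} (hz : z ≠ 0) (w : Fin n → ℂ) :
    HasFDerivAt (fun x => fderiv ℝ f x w) ((fderiv ℝ (fderiv ℝ f) z).flip w) z := by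
  have := (hasFDerivAt_fderiv f hf hz).clm_apply (hasFDerivAt_const w z)
  simpa using this

include hf in
lemma sd_eq {z : Fin n → ℂ} (hz : z ≠ 0) (v w : Fin n → ℂ) :
    fderiv ℝ (fun x => fderiv ℝ f x w) z v = fderiv ℝ (fderiv ℝ f) z v w := by
  rw [(hasFDerivAt_fderiv_apply f hf hz w).fderiv]; rfl

include hf hhom in
lemma ell_homog {l : ℂ} {z : Fin n → ℂ} (hl : l ≠ 0) (hz : z ≠ 0) (w : Fin n → ℂ) :
    ell f (l • z) w = (starRingEnd ℂ) l * ell f z w := by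
  have h1 : ∀ u, fderiv ℝ f (l • z) u = ‖l‖ ^ 2 * fderiv ℝ f z (l⁻¹ • u) := by
    intro u
    have := fderiv_smul' f hf hhom hl hz (l⁻¹ • u)
    rwa [smul_inv_smul₀ hl] at this
  have hIc : l⁻¹ • (Complex.I • w) = Complex.I • (l⁻¹ • w) := smul_comm _ _ _
  have h2 : ell f (l • z) w = ((‖l‖ : ℝ) : ℂ) ^ 2 * ell f z (l⁻¹ • w) := by
    simp only [ell, h1, hIc]
    push_cast
    ring
  rw [h2, ell_smul]
  have habs : ((‖l‖ : ℝ) : ℂ) ^ 2 = l * (starRingEnd ℂ) l := by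
    rw [Complex.mul_conj]
    norm_cast
    rw [Complex.sq_norm]
  rw [habs]
  field_simp

include hf hhom in
lemma chi_smul (w : Fin n → ℂ) (l : ℂ) (z : Fin n → ℂ) :
    chi f w (l • z) = l * chi f w z := by
  by_cases hl : l = 0
  · simp [hl, chi]
  by_cases hz : z = 0
  · simp [hz, chi]
  have hlz : l • z ≠ 0 := smul_ne_zero hl hz
  rw [chi, chi, if_neg hlz, if_neg hz, ell_homog f hf hhom hl hz w]
  simp [map_mul]

lemma key_rot {z : Fin n → ℂ}
    (hA : ∀ j k, fderiv ℝ (fderiv ℝ f) z (dir1 n j) (dir1 n k)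
        = fderiv ℝ (fderiv ℝ f) z (dir2 n j) (dir2 n k))
    (hB : ∀ j k, fderiv ℝ (fderiv ℝ f) z (dir1 n j) (dir2 n k)
        = - fderiv ℝ (fderiv ℝ f) z (dir2 n j) (dir1 n k))
    (v w : Fin n → ℂ) :
    fderiv ℝ (fderiv ℝ f) z (Complex.I • v) (Complex.I • w)
      = fderiv ℝ (fderiv ℝ f) z v w := by
  set B := fderiv ℝ (fderiv ℝ f) z with hB2
  rw [bilin_expand B (Complex.I • v) (Complex.I • w), bilin_expand B v w]
  refine Finset.sum_congr rfl fun j _ => Finset.sum_congr rfl fun k _ => ?_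
  have hre : ∀ (u : Fin n → ℂ) (t : Fin n), ((Complex.I • u) t).re = -(u t).im := by
    intro u t; simp [Pi.smul_apply]
  have him : ∀ (u : Fin n → ℂ) (t : Fin n), ((Complex.I • u) t).im = (u t).re := by
    intro u t; simp [Pi.smul_apply]
  rw [hre, hre, him, him, hA j k, hB j k]
  ring

include hf in
lemma chi_diffC
    (hkey : ∀ (z : Fin n → ℂ), z ≠ 0 → ∀ v w,
      fderiv ℝ (fderiv ℝ f) z (Complex.I • v) (Complex.I • w) = fderiv ℝ (fderiv ℝ f) z v w)
    (w : Fin n → ℂ) {z₀ : Fin n → ℂ} (hz : z₀ ≠ 0) :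
    DifferentiableAt ℂ (chi f w) z₀ := by
  set D2 := fderiv ℝ (fderiv ℝ f) z₀ with hD2def
  set L : (Fin n → ℂ) →L[ℝ] ℂ :=
    Complex.ofRealCLM.comp (D2.flip w)
      - Complex.I • (Complex.ofRealCLM.comp (D2.flip (Complex.I • w))) with hLdef
  have ha : HasFDerivAt (fun z => ((fderiv ℝ f z w : ℝ) : ℂ))
      (Complex.ofRealCLM.comp (D2.flip w)) z₀ :=
    (Complex.ofRealCLM.hasFDerivAt).comp z₀ (hasFDerivAt_fderiv_apply f hf hz w)
  have hb : HasFDerivAt (fun z => ((fderiv ℝ f z (Complex.I • w) : ℝ) : ℂ))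
      (Complex.ofRealCLM.comp (D2.flip (Complex.I • w))) z₀ :=
    (Complex.ofRealCLM.hasFDerivAt).comp z₀ (hasFDerivAt_fderiv_apply f hf hz _)
  have hell : HasFDerivAt (fun z => ell f z w) L z₀ := by
    exact ha.sub (hb.const_mul Complex.I)
  set M : (Fin n → ℂ) →L[ℝ] ℂ :=
    ((Complex.conjCLE : ℂ ≃L[ℝ] ℂ) : ℂ →L[ℝ] ℂ).comp L with hMdef
  have hconj : HasFDerivAt (fun z => (starRingEnd ℂ) (ell f z w)) M z₀ := by
    have := ((Complex.conjCLE : ℂ ≃L[ℝ] ℂ) : ℂ →L[ℝ] ℂ).hasFDerivAt.comp z₀ hell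
    simpa [Function.comp_def] using this
  have hev : chi f w =ᶠ[nhds z₀] fun z => (starRingEnd ℂ) (ell f z w) := by
    filter_upwards [eventually_ne_nhds hz] with z hz'
    rw [chi, if_neg hz']
  have hchi : HasFDerivAt (chi f w) M z₀ := hconj.congr_of_eventuallyEq hev
  have hMv : ∀ v, M v = ((D2 v w : ℝ) : ℂ) + Complex.I * ((D2 v (Complex.I • w) : ℝ) : ℂ) := by
    intro v
    simp [hMdef, hLdef, Complex.conjCLE_apply, map_sub, Complex.conj_ofReal]
  have hM : ∀ v, M (Complex.I • v) = Complex.I * M v := by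
    intro v
    have k1 := hkey z₀ hz v w
    have k2 : D2 (Complex.I • v) w = -(D2 v (Complex.I • w)) := by
      have h5 := hkey z₀ hz v (Complex.I • w)
      rw [smul_smul, Complex.I_mul_I, neg_one_smul, map_neg] at h5
      linarith
    rw [hMv, hMv, k1, k2]
    push_cast
    linear_combination (-((D2 v (Complex.I • w) : ℝ) : ℂ)) * Complex.I_sq
  let M' : (Fin n → ℂ) →ₗ[ℂ] ℂ :=
    { toFun := fun v => M v
      map_add' := fun a b => M.map_add a b
      map_smul' := by
        intro c v
        simp only [RingHom.id_apply]
        rw [smul_decomp c v, M.map_add, M.map_smul, M.map_smul, hM]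
        simp only [smul_eq_mul, Complex.real_smul]
        conv_rhs => rw [← Complex.re_add_im c]
        ring }
  have hres : (LinearMap.toContinuousLinearMap M').restrictScalars ℝ = M := by
    ext v; rfl
  exact (hasFDerivAt_of_restrictScalars ℝ hchi hres).differentiableAt

include hf hhom in
lemma chi_add
    (hkey : ∀ (z : Fin n → ℂ), z ≠ 0 → ∀ v w,
      fderiv ℝ (fderiv ℝ f) z (Complex.I • v) (Complex.I • w) = fderiv ℝ (fderiv ℝ f) z v w)
    (w u v : Fin n → ℂ) :
    chi f w (u + v) = chi f w u + chi f w v := by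
  by_cases hu : u = 0
  · simp [hu, chi_zero]
  by_cases hv : v = 0
  · simp [hv, chi_zero]
  by_cases huv : u + v = 0
  · have hveq : v = (-1 : ℂ) • u := by
      rw [neg_one_smul]
      exact (neg_eq_of_add_eq_zero_right huv).symm
    rw [huv, hveq, chi_smul f hf hhom, chi_zero]
    ring
  by_cases hdep : ∃ a : ℂ, u = a • v
  · rcases hdep with ⟨a, rfl⟩
    have h1 : a • v + v = (a + 1) • v := by rw [add_smul, one_smul]
    rw [h1, chi_smul f hf hhom, chi_smul f hf hhom]
    ring
  have hind : ∀ a : ℂ, u + a • v ≠ 0 := by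
    intro a h
    exact hdep ⟨-a, by rw [neg_smul]; exact (neg_eq_of_add_eq_zero_left h).symm⟩
  set ψ : ℂ → ℂ := fun a => chi f w (u + a • v) - a * chi f w v with hψ
  have hg : ∀ a : ℂ, DifferentiableAt ℂ (fun b : ℂ => u + b • v) a := fun a =>
    (differentiableAt_id.smul_const v).const_add u
  have hψd : Differentiable ℂ ψ := by
    intro a
    exact ((chi_diffC f hf hkey w (hind a)).comp a (hg a)).sub
      (differentiableAt_id.mul_const _)
  obtain ⟨C, hC⟩ : ∃ C : ℝ, ∀ᶠ μ in nhds (0:ℂ), ‖chi f w (v + μ • u) - chi f w v‖ ≤ C * ‖μ‖ := by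
    have hd : DifferentiableAt ℂ (fun μ : ℂ => chi f w (v + μ • u)) 0 :=
      (chi_diffC f hf hkey w (z₀ := v + (0:ℂ) • u) (by simpa using hv)).comp (g := chi f w) 0
        (show DifferentiableAt ℂ (fun μ : ℂ => v + μ • u) 0 from
          (differentiableAt_id.smul_const u).const_add v)
    have hO := hd.hasFDerivAt.isBigO_sub
    rw [Asymptotics.isBigO_iff] at hO
    rcases hO with ⟨C, hC⟩
    refine ⟨C, ?_⟩
    simpa using hC
  rcases Metric.eventually_nhds_iff.mp hC with ⟨δ, hδpos, hball⟩
  set R : ℝ := max (2 / δ) 1 with hR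
  have hbound : ∀ a : ℂ, R < ‖a‖ → ‖ψ a‖ ≤ C := by
    intro a ha
    have hR1 : (1:ℝ) ≤ R := le_max_right _ _
    have hapos : (0:ℝ) < ‖a‖ := lt_of_lt_of_le one_pos (le_of_lt (lt_of_le_of_lt hR1 ha))
    have ha0 : a ≠ 0 := by simpa using ne_of_gt hapos
    have h1 : u + a • v = a • (v + a⁻¹ • u) := by
      rw [smul_add, smul_smul, mul_inv_cancel₀ ha0, one_smul, add_comm]
    have h2 : ψ a = a * (chi f w (v + a⁻¹ • u) - chi f w v) := by
      rw [hψ]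
      simp only []
      rw [h1, chi_smul f hf hhom]
      ring
    have hδR : ‖a⁻¹‖ < δ := by
      rw [norm_inv]
      have h2δ : 2 / δ < ‖a‖ := lt_of_le_of_lt (le_max_left _ _) ha
      have h2δpos : (0:ℝ) < 2 / δ := by positivity
      have hlt : ‖a‖⁻¹ < (2/δ)⁻¹ := by
        rw [inv_lt_inv₀ hapos h2δpos]
        exact h2δ
      rw [inv_div] at hlt
      linarith
    have h3 : ‖chi f w (v + a⁻¹ • u) - chi f w v‖ ≤ C * ‖a⁻¹‖ :=
      hball (by rwa [dist_zero_right])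
    rw [h2, norm_mul]
    calc ‖a‖ * ‖chi f w (v + a⁻¹ • u) - chi f w v‖ ≤ ‖a‖ * (C * ‖a⁻¹‖) :=
          mul_le_mul_of_nonneg_left h3 (le_of_lt hapos)
      _ = C := by
          rw [norm_inv]
          field_simp
  have hrange : Set.range ψ ⊆ ψ '' (Metric.closedBall 0 R) ∪ Metric.closedBall 0 C := by
    rintro x ⟨a, rfl⟩
    by_cases hA : ‖a‖ ≤ R
    · exact Or.inl ⟨a, by rwa [Metric.mem_closedBall, dist_zero_right], rfl⟩
    · exact Or.inr (by
        rw [Metric.mem_closedBall, dist_zero_right]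
        exact hbound a (lt_of_not_ge hA))
  have hbdd : Bornology.IsBounded (Set.range ψ) :=
    ((((isCompact_closedBall (0:ℂ) R).image hψd.continuous).isBounded).union
      Metric.isBounded_closedBall).subset hrange
  have hEq := hψd.apply_eq_apply_of_bounded hbdd 1 0
  have h10 : ψ 1 = chi f w (u + v) - chi f w v := by simp [hψ]
  have h00 : ψ 0 = chi f w u := by simp [hψ]
  rw [h10, h00] at hEq
  linear_combination hEq

include hf hhom in
lemma chi_linear
    (hkey : ∀ (z : Fin n → ℂ), z ≠ 0 → ∀ v w,
      fderiv ℝ (fderiv ℝ f) z (Complex.I • v) (Complex.I • w) = fderiv ℝ (fderiv ℝ f) z v w)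
    (w z : Fin n → ℂ) :
    chi f w z = ∑ j, z j * chi f w (Pi.single j 1) := by
  let A : (Fin n → ℂ) →+ ℂ := AddMonoidHom.mk' (chi f w) (chi_add f hf hhom hkey w)
  have h1 : z = ∑ j, (z j) • (Pi.single j (1:ℂ) : Fin n → ℂ) := by
    conv_lhs => rw [← Finset.univ_sum_single z]
    refine Finset.sum_congr rfl fun j _ => ?_
    rw [← Pi.single_smul, smul_eq_mul, mul_one]
  calc chi f w z = A z := rfl
    _ = ∑ j, A ((z j) • (Pi.single j (1:ℂ) : Fin n → ℂ)) := by
        conv_lhs => rw [h1]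
        exact map_sum A _ _
    _ = ∑ j, z j * chi f w (Pi.single j 1) :=
        Finset.sum_congr rfl fun j _ => chi_smul f hf hhom w (z j) (Pi.single j 1)

end withf

end HermAux

/-- `a_{jk} = b_{jk} = 0` everywhere (for `z ≠ 0`) iff
`F(y,z) = ½ h_{jk}(y) conj(z^j) z^k` for some Hermitian tensor `h(y)` independent of `z`. -/
theorem aTensor_bTensor_vanish_iff_hermitian_form
    (n : ℕ) (F : (Fin n → ℝ) → (Fin n → ℂ) → ℝ)
    (hF : ∀ (y : Fin n → ℝ) (z : Fin n → ℂ), z ≠ 0 → ContDiffAt ℝ 2 (F y) z)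
    (hhom : ∀ (l : ℂ) (y : Fin n → ℝ) (z : Fin n → ℂ),
      F y (l • z) = ‖l‖ ^ 2 * F y z) :
    (∀ (y : Fin n → ℝ) (z : Fin n → ℂ), z ≠ 0 → ∀ j k : Fin n,
      aTensor n F y z j k = 0 ∧ bTensor n F y z j k = 0) ↔
    (∃ h : (Fin n → ℝ) → Matrix (Fin n) (Fin n) ℂ,
      (∀ y : Fin n → ℝ, (h y).IsHermitian) ∧
      ∀ (y : Fin n → ℝ) (z : Fin n → ℂ),
        (F y z : ℂ) = (1 / 2 : ℂ) * ∑ j : Fin n, ∑ k : Fin n,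
          h y j k * (starRingEnd ℂ) (z j) * z k) := by
  constructor
  · -- forward direction
    intro hab
    refine ⟨fun y => Matrix.of (fun j k => (1/2 : ℂ) *
      (HermAux.ell (F y) (Pi.single j 1) (Pi.single k 1)
        + (starRingEnd ℂ) (HermAux.ell (F y) (Pi.single k 1) (Pi.single j 1)))), ?_, ?_⟩
    · intro y
      refine Matrix.IsHermitian.ext fun i j => ?_
      show (starRingEnd ℂ) _ = _
      simp only [Matrix.of_apply, map_mul, map_add, Complex.conj_conj, map_div₀, map_one,
        map_ofNat]
      ring
    · intro y z
      have hfy : ∀ z : Fin n → ℂ, z ≠ 0 → ContDiffAt ℝ 2 (F y) z := hF y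
      have hhomy : ∀ (l : ℂ) (z : Fin n → ℂ), F y (l • z) = ‖l‖ ^ 2 * F y z :=
        fun l z => hhom l y z
      by_cases hz : z = 0
      · subst hz
        have h0 : F y 0 = 0 := by
          have h1 := hhom 0 y 0
          rw [smul_zero] at h1
          simpa using h1
        simp [h0]
      -- the key rotation invariance of the Hessian
      have hkey : ∀ (zz : Fin n → ℂ), zz ≠ 0 → ∀ v w,
          fderiv ℝ (fderiv ℝ (F y)) zz (Complex.I • v) (Complex.I • w)
            = fderiv ℝ (fderiv ℝ (F y)) zz v w := by
        intro zz hzz v w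
        have esd : ∀ v w : Fin n → ℂ,
            secondDeriv n F y zz v w = fderiv ℝ (fderiv ℝ (F y)) zz v w :=
          fun v w => HermAux.sd_eq (F y) hfy hzz v w
        refine HermAux.key_rot (F y) (fun j k => ?_) (fun j k => ?_) v w
        · have ha := (hab y zz hzz j k).1
          rw [aTensor, esd, esd] at ha
          linarith
        · have hb := (hab y zz hzz j k).2
          rw [bTensor, esd, esd] at hb
          linarith
      have heuler := HermAux.euler (F y) hfy hhomy hz
      have h4 : ((F y z : ℝ) : ℂ) = (1/4 : ℂ) *
          (HermAux.ell (F y) z z + (starRingEnd ℂ) (HermAux.ell (F y) z z)) := by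
        have hsum : HermAux.ell (F y) z z + (starRingEnd ℂ) (HermAux.ell (F y) z z)
            = 2 * ((fderiv ℝ (F y) z z : ℝ) : ℂ) := by
          simp only [HermAux.ell, map_sub, map_mul, Complex.conj_ofReal, Complex.conj_I]
          ring
        rw [hsum, heuler]
        push_cast
        ring
      have h5 : HermAux.ell (F y) z z = ∑ j, ∑ k, (starRingEnd ℂ) (z j) * z k
          * HermAux.ell (F y) (Pi.single j 1) (Pi.single k 1) := by
        have h1 : HermAux.ell (F y) z z = (starRingEnd ℂ) (HermAux.chi (F y) z z) := by
          rw [HermAux.chi, if_neg hz, Complex.conj_conj]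
        rw [h1, HermAux.chi_linear (F y) hfy hhomy hkey z z, map_sum]
        refine Finset.sum_congr rfl fun j _ => ?_
        have hsj : (Pi.single j (1:ℂ) : Fin n → ℂ) ≠ 0 := by
          intro h0
          have := congrFun h0 j
          simp at this
        rw [map_mul, HermAux.chi, if_neg hsj, Complex.conj_conj,
          HermAux.ell_expand (F y) (Pi.single j 1) z, Finset.mul_sum]
        refine Finset.sum_congr rfl fun k _ => ?_
        ring
      have h6 : (starRingEnd ℂ) (∑ j, ∑ k, (starRingEnd ℂ) (z j) * z k
            * HermAux.ell (F y) (Pi.single j 1) (Pi.single k 1))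
          = ∑ j, ∑ k, (starRingEnd ℂ) (z j) * z k
            * (starRingEnd ℂ) (HermAux.ell (F y) (Pi.single k 1) (Pi.single j 1)) := by
        rw [map_sum]
        have hint : ∀ j, (starRingEnd ℂ) (∑ k, (starRingEnd ℂ) (z j) * z k
              * HermAux.ell (F y) (Pi.single j 1) (Pi.single k 1))
            = ∑ k, z j * (starRingEnd ℂ) (z k)
              * (starRingEnd ℂ) (HermAux.ell (F y) (Pi.single j 1) (Pi.single k 1)) := by
          intro j
          rw [map_sum]
          refine Finset.sum_congr rfl fun k _ => ?_
          simp only [map_mul, Complex.conj_conj]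
        simp_rw [hint]
        rw [Finset.sum_comm]
        refine Finset.sum_congr rfl fun j _ => Finset.sum_congr rfl fun k _ => ?_
        ring
      rw [h4, h5, h6]
      simp only [Matrix.of_apply, Finset.mul_sum, ← Finset.sum_add_distrib]
      refine Finset.sum_congr rfl fun j _ => Finset.sum_congr rfl fun k _ => ?_
      ring
  · -- backward direction
    rintro ⟨h, hherm, hFeq⟩
    intro y z hz j k
    set sesq : (Fin n → ℂ) → (Fin n → ℂ) → ℂ := fun u v =>
      (1/2 : ℂ) * ∑ p, ∑ q, h y p q * (starRingEnd ℂ) (u p) * v q with hsesq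
    have hfe : ∀ x, F y x = (sesq x x).re := by
      intro x
      have h1 := congrArg Complex.re (hFeq y x)
      simpa [hsesq] using h1
    have sesq_addl : ∀ u u' v, sesq (u + u') v = sesq u v + sesq u' v := by
      intro u u' v
      simp only [hsesq, Pi.add_apply, map_add, Finset.mul_sum]
      rw [← Finset.sum_add_distrib]
      refine Finset.sum_congr rfl fun p _ => ?_
      rw [← Finset.sum_add_distrib]
      refine Finset.sum_congr rfl fun q _ => ?_
      ring
    have sesq_addr : ∀ u v v', sesq u (v + v') = sesq u v + sesq u v' := by
      intro u v v'
      simp only [hsesq, Pi.add_apply, Finset.mul_sum]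
      rw [← Finset.sum_add_distrib]
      refine Finset.sum_congr rfl fun p _ => ?_
      rw [← Finset.sum_add_distrib]
      refine Finset.sum_congr rfl fun q _ => ?_
      ring
    have sesq_smull : ∀ (t : ℝ) u v, sesq (t • u) v = (t : ℂ) * sesq u v := by
      intro t u v
      simp only [hsesq, Pi.smul_apply, Complex.real_smul, map_mul, Complex.conj_ofReal,
        Finset.mul_sum]
      refine Finset.sum_congr rfl fun p _ => Finset.sum_congr rfl fun q _ => ?_
      ring
    have sesq_smulr : ∀ (t : ℝ) u v, sesq u (t • v) = (t : ℂ) * sesq u v := by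
      intro t u v
      simp only [hsesq, Pi.smul_apply, Complex.real_smul, Finset.mul_sum]
      refine Finset.sum_congr rfl fun p _ => Finset.sum_congr rfl fun q _ => ?_
      ring
    let R2 : (Fin n → ℂ) →ₗ[ℝ] (Fin n → ℂ) →ₗ[ℝ] ℝ :=
      LinearMap.mk₂ ℝ (fun u v => (sesq u v).re + (sesq v u).re)
        (fun u u' v => by
          rw [sesq_addl, sesq_addr]; simp only [Complex.add_re]; ring)
        (fun t u v => by
          rw [sesq_smull, sesq_smulr]
          simp only [smul_eq_mul, Complex.mul_re, Complex.ofReal_re, Complex.ofReal_im]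
          ring)
        (fun u v v' => by
          rw [sesq_addr, sesq_addl]; simp only [Complex.add_re]; ring)
        (fun t u v => by
          rw [sesq_smulr, sesq_smull]
          simp only [smul_eq_mul, Complex.mul_re, Complex.ofReal_re, Complex.ofReal_im]
          ring)
    let B1 : (Fin n → ℂ) →ₗ[ℝ] ((Fin n → ℂ) →L[ℝ] ℝ) :=
      { toFun := fun u => LinearMap.toContinuousLinearMap (R2 u)
        map_add' := by intro a b; ext v; simp
        map_smul' := by intro t a; ext v; simp }
    let Bc : (Fin n → ℂ) →L[ℝ] (Fin n → ℂ) →L[ℝ] ℝ := LinearMap.toContinuousLinearMap B1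
    have hBc : ∀ u v, Bc u v = (sesq u v).re + (sesq v u).re := fun u v => rfl
    have hD : ∀ x, HasFDerivAt (F y) (Bc x) x := by
      intro x
      have hb := Bc.isBoundedBilinearMap
      have hdiag : HasFDerivAt (fun x : Fin n → ℂ => (x, x))
          ((ContinuousLinearMap.id ℝ (Fin n → ℂ)).prod (ContinuousLinearMap.id ℝ (Fin n → ℂ)))
          x :=
        ((ContinuousLinearMap.id ℝ (Fin n → ℂ)).prod
          (ContinuousLinearMap.id ℝ (Fin n → ℂ))).hasFDerivAt
      have h1 : HasFDerivAt (fun x : Fin n → ℂ => Bc x x)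
          ((hb.deriv (x,x)).comp ((ContinuousLinearMap.id ℝ (Fin n → ℂ)).prod
            (ContinuousLinearMap.id ℝ (Fin n → ℂ)))) x :=
        HasFDerivAt.comp (f := fun x : Fin n → ℂ => (x, x)) x (hb.hasFDerivAt (x, x)) hdiag
      have h2 := h1.const_mul (1/2 : ℝ)
      have hfeq2 : F y = fun x : Fin n → ℂ => (1/2 : ℝ) * Bc x x := by
        funext x
        rw [hfe x, hBc]
        ring
      have hder : ((1/2:ℝ) • ((hb.deriv (x,x)).comp
          ((ContinuousLinearMap.id ℝ (Fin n → ℂ)).prod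
            (ContinuousLinearMap.id ℝ (Fin n → ℂ))))) = Bc x := by
        ext w
        simp only [ContinuousLinearMap.smul_apply, ContinuousLinearMap.coe_comp',
          Function.comp_apply, ContinuousLinearMap.prod_apply, ContinuousLinearMap.coe_id',
          id_eq, IsBoundedBilinearMap.deriv_apply, smul_eq_mul, hBc]
        ring
      rw [hfeq2, ← hder]
      exact h2
    have hsd : ∀ v w, secondDeriv n F y z v w = Bc v w := by
      intro v w
      have hfd : (fun x => fderiv ℝ (F y) x w) = fun x => (Bc.flip w) x := by
        funext x
        rw [show fderiv ℝ (F y) x = Bc x from (hD x).fderiv]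
        rfl
      rw [secondDeriv, hfd, (Bc.flip w).fderiv]
      rfl
    have hsingle : ∀ (p q : Fin n) (α β : ℂ),
        sesq (Pi.single p α) (Pi.single q β) = (1/2 : ℂ) * (h y p q * (starRingEnd ℂ) α * β) := by
      intro p q α β
      rw [hsesq]
      simp only []
      congr 1
      rw [Finset.sum_eq_single p]
      · rw [Finset.sum_eq_single q]
        · simp
        · intro b _ hb
          simp [Pi.single_apply, hb]
        · intro hq; exact absurd (Finset.mem_univ q) hq
      · intro b _ hb
        simp [Pi.single_apply, hb]
      · intro hp; exact absurd (Finset.mem_univ p) hp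
    constructor
    · rw [aTensor, hsd, hsd, hBc, hBc]
      rw [show dir1 n j = Pi.single j (1:ℂ) from rfl, show dir1 n k = Pi.single k (1:ℂ) from rfl,
        show dir2 n j = Pi.single j Complex.I from rfl,
        show dir2 n k = Pi.single k Complex.I from rfl]
      rw [hsingle, hsingle, hsingle, hsingle]
      simp only [map_one, Complex.conj_I, Complex.mul_re, Complex.mul_im, Complex.one_re,
        Complex.one_im, Complex.I_re, Complex.I_im, Complex.neg_re, Complex.neg_im]
      ring
    · rw [bTensor, hsd, hsd, hBc, hBc]
      rw [show dir1 n j = Pi.single j (1:ℂ) from rfl, show dir1 n k = Pi.single k (1:ℂ) from rfl,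
        show dir2 n j = Pi.single j Complex.I from rfl,
        show dir2 n k = Pi.single k Complex.I from rfl]
      rw [hsingle, hsingle, hsingle, hsingle]
      simp only [map_one, Complex.conj_I, Complex.mul_re, Complex.mul_im, Complex.one_re,
        Complex.one_im, Complex.I_re, Complex.I_im, Complex.neg_re, Complex.neg_im]
      ring
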